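/- Suppose rank[Z(k); U(k)] = n+m for k = 0,…,T−1 and that R(k) = A(k)V(k) − V(k+1) − D(k) satisfies the signal-to-noise-ratio bound R(k)R(k)ᵀ ⪯ (1/γ(k))·Z(k+1)Z(k+1)ᵀ for k = 0,…,T−1, where γ(k) > 0. Let η ≥ 1 and ρ > η be finite constants, and suppose Y(k) ∈ ℝ^{L×n}, symmetric P(k) and scalars a(k) with 0 ≤ a(k) ≤ γ(k) satisfy: (i) the 3×3 block matrix [[P(k+1) − I_n − Z(k+1)Z(k+1)ᵀ, 0, Z(k+1)Y(k)], [0, a(k)I_L, Y(k)], [Y(k)ᵀZ(k+1)ᵀ, Y(k)ᵀ, P(k)]] ≻ 0 and Z(k)Y(k) = P(k) for k = 0,…,T−1; (ii) ηI_n ⪯ P(k) ⪯ ρI_n for k = 0,…,T. Let b be such that ‖B(j)‖ ≤ b for j = 0,…,T−1, and set K(k) = U(k)Y(k)P(k)^{−1}. Then every trajectory of x(k+1) = (A(k)+B(k)K(k))x(k) + B(k)K(k)v(k) + d(k) satisfies, for k = 0,…,T: ‖x(k)‖ ≤ √(ρ/η)·(1 − 1/ρ)^{k/2}·‖x(0)‖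 + b·(Σ_{j=0}^{k−1} √(ρ/η)·(1 − 1/ρ)^{(k−1−j)/2}·‖K(j)‖)·|v|_{k−1} + (Σ_{j=0}^{k−1} √(ρ/η)·(1 − 1/ρ)^{(k−1−j)/2})·|d|_{k−1}, with |v|_{k−1} = sup{‖v(j)‖ : 0 ≤ j ≤ k−1} and |d|_{k−1} = sup{‖d(j)‖ : 0 ≤ j ≤ k−1}. -/

import Mathlib

open Matrix

/-- Action of a real matrix on a Euclidean-space vector. -/
noncomputable def matVec {n m : ℕ} (M : Matrix (Fin n) (Fin m) ℝ)
    (v : EuclideanSpace ℝ (Fin m)) : EuclideanSpace ℝ (Fin n) :=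
  (WithLp.equiv 2 (Fin n → ℝ)).symm (M.mulVec (fun i => v i))

/-- Induced 2-norm (operator norm) of a real matrix. -/
noncomputable def opNorm2 {n m : ℕ} (M : Matrix (Fin n) (Fin m) ℝ) : ℝ :=
  ‖LinearMap.toContinuousLinearMap (Matrix.toEuclideanLin M)‖

section Aux
variable {N : ℕ}

lemma dotSelf_nonneg (x : Fin N → ℝ) : 0 ≤ x ⬝ᵥ x :=
  Finset.sum_nonneg fun i _ => mul_self_nonneg _

lemma quad_nonneg {Q : Matrix (Fin N) (Fin N) ℝ} (hQ : Q.PosSemidef) (x : Fin N → ℝ) :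
    0 ≤ x ⬝ᵥ Q *ᵥ x := by simpa using hQ.dotProduct_mulVec_nonneg x

lemma psd_symm {Q : Matrix (Fin N) (Fin N) ℝ} (hQ : Q.PosSemidef) : Qᵀ = Q := by
  have := hQ.1
  rwa [Matrix.IsHermitian, conjTranspose_eq_transpose_of_trivial] at this

lemma psd_cs {Q : Matrix (Fin N) (Fin N) ℝ} (hQ : Q.PosSemidef) (u v : Fin N → ℝ) :
    (u ⬝ᵥ Q *ᵥ v) ^ 2 ≤ (u ⬝ᵥ Q *ᵥ u) * (v ⬝ᵥ Q *ᵥ v) := by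
  obtain ⟨S, hSt, hS⟩ : ∃ S : Matrix (Fin N) (Fin N) ℝ, Sᵀ = S ∧ S * S = Q := by
    open scoped MatrixOrder in
    exact ⟨CFC.sqrt Q, (CFC.sqrt_nonneg Q).posSemidef.1, CFC.sqrt_mul_sqrt_self Q hQ.nonneg⟩
  have key : ∀ a b : Fin N → ℝ, a ⬝ᵥ Q *ᵥ b = (S *ᵥ a) ⬝ᵥ (S *ᵥ b) := by
    intro a b
    rw [← hS, ← mulVec_mulVec, dotProduct_mulVec, ← hSt, vecMul_transpose, hSt]
  rw [key u v, key u u, key v v]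
  have := Finset.sum_mul_sq_le_sq_mul_sq Finset.univ (S *ᵥ u) (S *ᵥ v)
  simpa [dotProduct, sq] using this

lemma symm_cross {Q : Matrix (Fin N) (Fin N) ℝ} (hQt : Qᵀ = Q) (u v : Fin N → ℝ) :
    v ⬝ᵥ Q *ᵥ u = u ⬝ᵥ Q *ᵥ v := by
  rw [dotProduct_mulVec, ← hQt, vecMul_transpose, hQt, dotProduct_comm]

lemma quad_triangle {Q : Matrix (Fin N) (Fin N) ℝ} (hQ : Q.PosSemidef) (u v : Fin N → ℝ) :
    Real.sqrt ((u + v) ⬝ᵥ Q *ᵥ (u + v)) ≤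
      Real.sqrt (u ⬝ᵥ Q *ᵥ u) + Real.sqrt (v ⬝ᵥ Q *ᵥ v) := by
  have hu := quad_nonneg hQ u
  have hv := quad_nonneg hQ v
  have hcross : u ⬝ᵥ Q *ᵥ v ≤ Real.sqrt (u ⬝ᵥ Q *ᵥ u) * Real.sqrt (v ⬝ᵥ Q *ᵥ v) := by
    have h1 : u ⬝ᵥ Q *ᵥ v ≤ |u ⬝ᵥ Q *ᵥ v| := le_abs_self _
    have h2 : |u ⬝ᵥ Q *ᵥ v| = Real.sqrt ((u ⬝ᵥ Q *ᵥ v) ^ 2) := (Real.sqrt_sq_eq_abs _).symm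
    rw [← Real.sqrt_mul hu]
    exact h1.trans (h2.le.trans (Real.sqrt_le_sqrt (psd_cs hQ u v)))
  have hexp : (u + v) ⬝ᵥ Q *ᵥ (u + v) = u ⬝ᵥ Q *ᵥ u + 2 * (u ⬝ᵥ Q *ᵥ v) + v ⬝ᵥ Q *ᵥ v := by
    have hvu := symm_cross (psd_symm hQ) u v
    simp only [mulVec_add, add_dotProduct, dotProduct_add, hvu]
    ring
  have hle : (u + v) ⬝ᵥ Q *ᵥ (u + v) ≤
      (Real.sqrt (u ⬝ᵥ Q *ᵥ u) + Real.sqrt (v ⬝ᵥ Q *ᵥ v)) ^ 2 := by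
    rw [hexp, add_sq, Real.sq_sqrt hu, Real.sq_sqrt hv]
    nlinarith [hcross]
  calc Real.sqrt ((u + v) ⬝ᵥ Q *ᵥ (u + v)) ≤
      Real.sqrt ((Real.sqrt (u ⬝ᵥ Q *ᵥ u) + Real.sqrt (v ⬝ᵥ Q *ᵥ v)) ^ 2) :=
        Real.sqrt_le_sqrt hle
    _ = _ := Real.sqrt_sq (by positivity)

end Aux

section Aux2
variable {N : ℕ}

lemma pd_inv_mul {P : Matrix (Fin N) (Fin N) ℝ} (hP : P.PosDef) : P * P⁻¹ = 1 :=
  mul_nonsing_inv P (isUnit_iff_ne_zero.2 hP.det_pos.ne')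

lemma pd_mul_inv' {P : Matrix (Fin N) (Fin N) ℝ} (hP : P.PosDef) : P⁻¹ * P = 1 :=
  nonsing_inv_mul P (isUnit_iff_ne_zero.2 hP.det_pos.ne')

lemma inv_symm {P : Matrix (Fin N) (Fin N) ℝ} (hPt : Pᵀ = P) : (P⁻¹)ᵀ = P⁻¹ := by
  rw [transpose_nonsing_inv, hPt]

/-- If `c ∙ I ⪯ P` then `P⁻¹ ⪯ c⁻¹ ∙ I` (quadratic-form version). -/
lemma quad_inv_le {P : Matrix (Fin N) (Fin N) ℝ} (hP : P.PosDef) {c : ℝ}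
    (hc : 0 < c) (hlow : ∀ x, c * (x ⬝ᵥ x) ≤ x ⬝ᵥ P *ᵥ x) (x : Fin N → ℝ) :
    x ⬝ᵥ P⁻¹ *ᵥ x ≤ c⁻¹ * (x ⬝ᵥ x) := by
  set y := P⁻¹ *ᵥ x with hy
  have hxy : P *ᵥ y = x := by rw [hy, mulVec_mulVec, pd_inv_mul hP, one_mulVec]
  have ht0 : 0 ≤ x ⬝ᵥ P⁻¹ *ᵥ x := quad_nonneg hP.inv.posSemidef x
  have hyPy : y ⬝ᵥ P *ᵥ y = x ⬝ᵥ P⁻¹ *ᵥ x := by rw [hxy, dotProduct_comm]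
  have hy2 : c * (y ⬝ᵥ y) ≤ x ⬝ᵥ P⁻¹ *ᵥ x := hyPy ▸ hlow y
  have hcs : (x ⬝ᵥ y) ^ 2 ≤ (x ⬝ᵥ x) * (y ⬝ᵥ y) := by
    have := psd_cs (Matrix.PosSemidef.one (n := Fin N) (R := ℝ)) x y
    simpa using this
  have hxx : 0 ≤ x ⬝ᵥ x := dotSelf_nonneg x
  have hteq : x ⬝ᵥ y = x ⬝ᵥ P⁻¹ *ᵥ x := rfl
  rw [hteq] at hcs
  rcases eq_or_lt_of_le ht0 with h | h
  · rw [← h]; positivity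
  · have hyy : y ⬝ᵥ y ≤ c⁻¹ * (x ⬝ᵥ P⁻¹ *ᵥ x) := by
      rw [← mul_le_mul_iff_right₀ hc, ← mul_assoc, mul_inv_cancel₀ hc.ne', one_mul]
      exact hy2
    have h2 := hcs.trans (mul_le_mul_of_nonneg_left hyy hxx)
    nlinarith [h2, h, hc]

/-- If `P ⪯ c ∙ I` then `c⁻¹ ∙ I ⪯ P⁻¹`, i.e. `x⬝ᵥx ≤ c * xᵀP⁻¹x`. -/
lemma dot_le_inv_quad {P : Matrix (Fin N) (Fin N) ℝ} (hP : P.PosDef) (hPt : Pᵀ = P) {c : ℝ}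
    (hc : 0 < c) (hhigh : ∀ x, x ⬝ᵥ P *ᵥ x ≤ c * (x ⬝ᵥ x)) (x : Fin N → ℝ) :
    x ⬝ᵥ x ≤ c * (x ⬝ᵥ P⁻¹ *ᵥ x) := by
  set y := P⁻¹ *ᵥ x with hy
  have hxy : P *ᵥ y = x := by rw [hy, mulVec_mulVec, pd_inv_mul hP, one_mulVec]
  have ht0 : 0 ≤ x ⬝ᵥ P⁻¹ *ᵥ x := quad_nonneg hP.inv.posSemidef x
  have hyPy : y ⬝ᵥ P *ᵥ y = x ⬝ᵥ P⁻¹ *ᵥ x := by rw [hxy, dotProduct_comm]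
  have hyPx : y ⬝ᵥ P *ᵥ x = x ⬝ᵥ x := by
    rw [dotProduct_mulVec, ← hPt, vecMul_transpose, hxy]
  have hcs := psd_cs hP.posSemidef y x
  rw [hyPx, hyPy] at hcs
  have hxx : 0 ≤ x ⬝ᵥ x := dotSelf_nonneg x
  rcases eq_or_lt_of_le hxx with h | h
  · rw [← h]; positivity
  · nlinarith [hcs, mul_le_mul_of_nonneg_left (hhigh x) ht0, h]

/-- From `M P Mᵀ ⪯ c Q` (quadratic forms) conclude `Mᵀ Q⁻¹ M ⪯ c P⁻¹`. -/
lemma contraction {M P Q : Matrix (Fin N) (Fin N) ℝ} (hP : P.PosDef) (hPt : Pᵀ = P)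
    (hQ : Q.PosDef) (hQt : Qᵀ = Q) {c : ℝ} (hc : 0 ≤ c)
    (hkey : ∀ y, y ⬝ᵥ (M * P * Mᵀ) *ᵥ y ≤ c * (y ⬝ᵥ Q *ᵥ y)) (x : Fin N → ℝ) :
    (M *ᵥ x) ⬝ᵥ Q⁻¹ *ᵥ (M *ᵥ x) ≤ c * (x ⬝ᵥ P⁻¹ *ᵥ x) := by
  set u := M *ᵥ x with hu
  set y := Q⁻¹ *ᵥ u with hy
  set g := Mᵀ *ᵥ y with hg
  have hQy : Q *ᵥ y = u := by rw [hy, mulVec_mulVec, pd_inv_mul hQ, one_mulVec]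
  have ht : u ⬝ᵥ Q⁻¹ *ᵥ u = y ⬝ᵥ u := dotProduct_comm _ _
  have hyQy : y ⬝ᵥ Q *ᵥ y = y ⬝ᵥ u := by rw [hQy]
  have hinvP : (P⁻¹)ᵀ = P⁻¹ := inv_symm hPt
  have e1 : (P *ᵥ g) ⬝ᵥ P⁻¹ *ᵥ (P *ᵥ g) = g ⬝ᵥ (P *ᵥ g) := by
    rw [dotProduct_mulVec, ← hinvP, vecMul_transpose, mulVec_mulVec, pd_mul_inv' hP,
      one_mulVec]
  have e1' : (P *ᵥ g) ⬝ᵥ P⁻¹ *ᵥ x = g ⬝ᵥ x := by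
    rw [dotProduct_mulVec, ← hinvP, vecMul_transpose, mulVec_mulVec, pd_mul_inv' hP,
      one_mulVec]
  have e2' : g ⬝ᵥ x = y ⬝ᵥ u := by
    rw [hg, mulVec_transpose, ← dotProduct_mulVec, ← hu]
  have e2 : y ⬝ᵥ (M * P * Mᵀ) *ᵥ y = g ⬝ᵥ (P *ᵥ g) := by
    rw [← mulVec_mulVec, ← mulVec_mulVec, dotProduct_mulVec, ← mulVec_transpose, ← hg]
  have hcs := psd_cs hP.inv.posSemidef (P *ᵥ g) x
  rw [e1, e1', e2', ← e2] at hcs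
  have hk := hkey y
  rw [hyQy] at hk
  have ht0 : 0 ≤ y ⬝ᵥ u := by rw [← ht]; exact quad_nonneg hQ.inv.posSemidef u
  have hxq : 0 ≤ x ⬝ᵥ P⁻¹ *ᵥ x := quad_nonneg hP.inv.posSemidef x
  rw [ht]
  rcases eq_or_lt_of_le ht0 with h | h
  · rw [← h]; positivity
  · nlinarith [hcs, mul_le_mul_of_nonneg_right hk hxq, h]
end Aux2

section LMI
variable {n L : ℕ}

/-- Key consequence of the data-based LMI: the closed loop satisfies
`M P Mᵀ ⪯ P₊ - I` in quadratic form. -/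
lemma lmi_key {Pk Pk1 : Matrix (Fin n) (Fin n) ℝ} {Zk1 Rk : Matrix (Fin n) (Fin L) ℝ}
    {Yk : Matrix (Fin L) (Fin n) ℝ} {M : Matrix (Fin n) (Fin n) ℝ} {ak γk : ℝ}
    (hP : Pk.PosDef) (hPt : Pkᵀ = Pk)
    (hLMI : (Matrix.fromBlocks
        (Matrix.fromBlocks (Pk1 - 1 - Zk1 * Zk1ᵀ) (0 : Matrix (Fin n) (Fin L) ℝ)
          (0 : Matrix (Fin L) (Fin n) ℝ) (ak • (1 : Matrix (Fin L) (Fin L) ℝ)))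
        (Matrix.fromRows (Zk1 * Yk) Yk)
        (Matrix.fromCols (Ykᵀ * Zk1ᵀ) Ykᵀ) Pk).PosSemidef)
    (hSNR : ((1 / γk) • (Zk1 * Zk1ᵀ) - Rk * Rkᵀ).PosSemidef)
    (hγ : 0 < γk) (ha0 : 0 ≤ ak) (haγ : ak ≤ γk)
    (hMP : M * Pk = (Zk1 + Rk) * Yk) (z : Fin n → ℝ) :
    z ⬝ᵥ (M * Pk * Mᵀ) *ᵥ z ≤ z ⬝ᵥ Pk1 *ᵥ z - z ⬝ᵥ z := by
  have hinvP : (Pk⁻¹)ᵀ = Pk⁻¹ := inv_symm hPt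
  set W : Matrix (Fin n) (Fin n) ℝ := (Zk1 + Rk) * Yk with hW
  have hM : M = W * Pk⁻¹ := by
    rw [← hMP, Matrix.mul_assoc, pd_inv_mul hP, Matrix.mul_one]
  have hMPM : M * Pk * Mᵀ = W * Pk⁻¹ * Wᵀ := by
    rw [hM, Matrix.transpose_mul, hinvP]
    rw [Matrix.mul_assoc (W * Pk⁻¹), Matrix.mul_assoc W, ← Matrix.mul_assoc Pk⁻¹,
      pd_mul_inv' hP, Matrix.one_mul, ← Matrix.mul_assoc]
  set w : Fin n → ℝ := Wᵀ *ᵥ z with hw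
  set p : Fin n → ℝ := Pk⁻¹ *ᵥ w with hp
  have hPp : Pk *ᵥ p = w := by rw [hp, mulVec_mulVec, pd_inv_mul hP, one_mulVec]
  have hquad : z ⬝ᵥ (M * Pk * Mᵀ) *ᵥ z = w ⬝ᵥ p := by
    rw [hMPM, ← mulVec_mulVec, ← mulVec_mulVec, dotProduct_mulVec, ← mulVec_transpose,
      ← hw, ← hp]
  -- evaluate the LMI quadratic form at ξ
  set rz : Fin L → ℝ := Rkᵀ *ᵥ z with hrz
  set ξ : ((Fin n ⊕ Fin L) ⊕ Fin n) → ℝ := Sum.elim (Sum.elim z rz) (-p) with hξ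
  have h0 := hLMI.dotProduct_mulVec_nonneg ξ
  rw [show star ξ = ξ from star_trivial ξ] at h0
  have hexp : ξ ⬝ᵥ (Matrix.fromBlocks
        (Matrix.fromBlocks (Pk1 - 1 - Zk1 * Zk1ᵀ) (0 : Matrix (Fin n) (Fin L) ℝ)
          (0 : Matrix (Fin L) (Fin n) ℝ) (ak • (1 : Matrix (Fin L) (Fin L) ℝ)))
        (Matrix.fromRows (Zk1 * Yk) Yk)
        (Matrix.fromCols (Ykᵀ * Zk1ᵀ) Ykᵀ) Pk) *ᵥ ξ
      = (z ⬝ᵥ Pk1 *ᵥ z - z ⬝ᵥ z - z ⬝ᵥ (Zk1 * Zk1ᵀ) *ᵥ z) + ak * (rz ⬝ᵥ rz) - w ⬝ᵥ p := by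
    have e3 : (Ykᵀ * Zk1ᵀ) *ᵥ z + Ykᵀ *ᵥ rz = w := by
      rw [hrz, hw, hW, Matrix.transpose_mul, Matrix.transpose_add]
      simp [← mulVec_mulVec, add_mulVec, mulVec_add]
    have e4 : z ⬝ᵥ ((Zk1 * Yk) *ᵥ p) + rz ⬝ᵥ (Yk *ᵥ p) = w ⬝ᵥ p := by
      have t1 : z ⬝ᵥ ((Zk1 * Yk) *ᵥ p) = ((Zk1 * Yk)ᵀ *ᵥ z) ⬝ᵥ p := by
        rw [dotProduct_mulVec, ← mulVec_transpose]
      have t2 : rz ⬝ᵥ (Yk *ᵥ p) = (Ykᵀ *ᵥ rz) ⬝ᵥ p := by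
        rw [dotProduct_mulVec, ← mulVec_transpose]
      rw [t1, t2, ← add_dotProduct, Matrix.transpose_mul, e3]
    have e5 : p ⬝ᵥ (Pk *ᵥ p) = w ⬝ᵥ p := by rw [hPp, dotProduct_comm]
    have e6 : p ⬝ᵥ ((Ykᵀ * Zk1ᵀ) *ᵥ z) + p ⬝ᵥ (Ykᵀ *ᵥ rz) = w ⬝ᵥ p := by
      rw [← dotProduct_add, e3, dotProduct_comm]
    simp only [hξ, fromBlocks_mulVec, Matrix.fromRows_mulVec,
      Matrix.fromCols_mulVec_sumElim, Sum.elim_comp_inl, Sum.elim_comp_inr,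
      sumElim_dotProduct_sumElim, dotProduct_add, add_dotProduct, mulVec_add,
      sub_mulVec, dotProduct_sub, one_mulVec, zero_mulVec, dotProduct_zero, add_zero,
      zero_add, smul_mulVec, dotProduct_smul, smul_eq_mul, dotProduct_neg,
      neg_dotProduct, mulVec_neg]
    linarith [e4, e5, e6]
  rw [hexp] at h0
  -- signal-to-noise bound
  have hsnr := quad_nonneg hSNR z
  have hrr : z ⬝ᵥ (Rk * Rkᵀ) *ᵥ z = rz ⬝ᵥ rz := by
    rw [← mulVec_mulVec, dotProduct_mulVec, ← mulVec_transpose, ← hrz]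
  set zz : Fin L → ℝ := Zk1ᵀ *ᵥ z with hzz
  have hzzq : z ⬝ᵥ (Zk1 * Zk1ᵀ) *ᵥ z = zz ⬝ᵥ zz := by
    rw [← mulVec_mulVec, dotProduct_mulVec, ← mulVec_transpose, ← hzz]
  have hsnr' : rz ⬝ᵥ rz ≤ γk⁻¹ * (zz ⬝ᵥ zz) := by
    rw [sub_mulVec, dotProduct_sub, smul_mulVec, dotProduct_smul] at hsnr
    rw [hrr, hzzq] at hsnr
    simpa [one_div, smul_eq_mul] using sub_nonneg.1 hsnr
  have hrz0 : 0 ≤ rz ⬝ᵥ rz := dotSelf_nonneg rz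
  have hzz0 : 0 ≤ zz ⬝ᵥ zz := dotSelf_nonneg zz
  have hak : ak * (rz ⬝ᵥ rz) ≤ zz ⬝ᵥ zz := by
    calc ak * (rz ⬝ᵥ rz) ≤ ak * (γk⁻¹ * (zz ⬝ᵥ zz)) := by
          exact mul_le_mul_of_nonneg_left hsnr' ha0
      _ = (ak / γk) * (zz ⬝ᵥ zz) := by ring
      _ ≤ 1 * (zz ⬝ᵥ zz) := by
          apply mul_le_mul_of_nonneg_right _ hzz0
          rw [div_le_one hγ]; exact haγ
      _ = zz ⬝ᵥ zz := one_mul _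
  rw [hzzq] at h0
  rw [hquad]
  linarith [h0, hak]
end LMI

section Rec

lemma geom_rec {T : ℕ} (s c : ℕ → ℝ) {θ : ℝ} (hθ : 0 ≤ θ)
    (h : ∀ k < T, s (k + 1) ≤ θ * s k + c k) :
    ∀ k ≤ T, s k ≤ θ ^ k * s 0 + ∑ j ∈ Finset.range k, θ ^ (k - 1 - j) * c j := by
  intro k hk
  induction k with
  | zero => simp
  | succ k ih =>
    have hk' : k < T := lt_of_lt_of_le (Nat.lt_succ_self k) hk
    have ih' := ih (le_of_lt hk')
    calc s (k + 1) ≤ θ * s k + c k := h k hk'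
      _ ≤ θ * (θ ^ k * s 0 + ∑ j ∈ Finset.range k, θ ^ (k - 1 - j) * c j) + c k := by
          have := mul_le_mul_of_nonneg_left ih' hθ
          linarith
      _ = θ ^ (k + 1) * s 0 + ∑ j ∈ Finset.range (k + 1), θ ^ (k + 1 - 1 - j) * c j := by
          rw [Finset.sum_range_succ, mul_add, Finset.mul_sum]
          have hs : ∀ j ∈ Finset.range k, θ * (θ ^ (k - 1 - j) * c j) = θ ^ (k - j) * c j := by
            intro j hj
            have hj' : j < k := Finset.mem_range.1 hj
            have : k - 1 - j + 1 = k - j := by omega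
            rw [← this, pow_succ]
            ring
          rw [Finset.sum_congr rfl hs]
          have h1 : k + 1 - 1 - k = 0 := by omega
          have h2 : ∀ j ∈ Finset.range k, θ ^ (k + 1 - 1 - j) * c j = θ ^ (k - j) * c j := by
            intro j hj; congr 1
          rw [Finset.sum_congr rfl h2, h1]
          ring
end Rec

section Norms

lemma eucl_norm_eq {N : ℕ} (u : EuclideanSpace ℝ (Fin N)) :
    ‖u‖ = Real.sqrt ((fun i => u i) ⬝ᵥ (fun i => u i)) := by
  rw [EuclideanSpace.norm_eq]
  congr 1
  simp [dotProduct, Real.norm_eq_abs, sq_abs, sq]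

lemma matVec_norm_le {N M : ℕ} (A : Matrix (Fin N) (Fin M) ℝ) (u : EuclideanSpace ℝ (Fin M)) :
    ‖matVec A u‖ ≤ opNorm2 A * ‖u‖ := by
  have : matVec A u = (LinearMap.toContinuousLinearMap (Matrix.toEuclideanLin A)) u := rfl
  rw [this]
  exact (LinearMap.toContinuousLinearMap (Matrix.toEuclideanLin A)).le_opNorm u

lemma matVec_mul {N M K : ℕ} (A : Matrix (Fin N) (Fin M) ℝ) (B : Matrix (Fin M) (Fin K) ℝ)
    (u : EuclideanSpace ℝ (Fin K)) : matVec (A * B) u = matVec A (matVec B u) := by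
  ext i
  simp [matVec, mulVec_mulVec]

lemma sqrt_pow' {x : ℝ} (hx : 0 ≤ x) (n : ℕ) :
    Real.sqrt (x ^ n) = Real.sqrt x ^ n := by
  rw [← Real.sqrt_sq (pow_nonneg (Real.sqrt_nonneg x) n), ← pow_mul, mul_comm, pow_mul,
    Real.sq_sqrt hx]

end Norms

/-- Robust trajectory boundedness from noisy data under a
signal-to-noise-ratio bound (Corollary 6 of the paper). -/
theorem robust_bounded_trajectories_SNR
    {n m L T : ℕ}
    (A : ℕ → Matrix (Fin n) (Fin n) ℝ) (B : ℕ → Matrix (Fin n) (Fin m) ℝ)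
    (X V Z : ℕ → Matrix (Fin n) (Fin L) ℝ)
    (U : ℕ → Matrix (Fin m) (Fin L) ℝ)
    (D : ℕ → Matrix (Fin n) (Fin L) ℝ)
    (hZ : ∀ k, Z k = X k + V k)
    (hdata : ∀ k < T, X (k + 1) = A k * X k + B k * U k + D k)
    (hrank : ∀ k < T, (Matrix.fromRows (Z k) (U k)).rank = n + m)
    (R : ℕ → Matrix (Fin n) (Fin L) ℝ)
    (hR : ∀ k < T, R k = A k * V k - V (k + 1) - D k)
    (γ : ℕ → ℝ) (hγ : ∀ k < T, 0 < γ k)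
    (hSNR : ∀ k < T,
      ((1 / γ k) • (Z (k + 1) * (Z (k + 1))ᵀ) - R k * (R k)ᵀ).PosSemidef)
    (η ρ : ℝ) (hη : 1 ≤ η) (hρ : η < ρ)
    (Y : ℕ → Matrix (Fin L) (Fin n) ℝ) (P : ℕ → Matrix (Fin n) (Fin n) ℝ)
    (a : ℕ → ℝ) (ha : ∀ k < T, 0 ≤ a k ∧ a k ≤ γ k)
    (hPsymm : ∀ k ≤ T, (P k).IsSymm)
    (hLMI : ∀ k < T,
      (Matrix.fromBlocks
        (Matrix.fromBlocks (P (k + 1) - 1 - Z (k + 1) * (Z (k + 1))ᵀ)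
          (0 : Matrix (Fin n) (Fin L) ℝ)
          (0 : Matrix (Fin L) (Fin n) ℝ)
          (a k • (1 : Matrix (Fin L) (Fin L) ℝ)))
        (Matrix.fromRows (Z (k + 1) * Y k) (Y k))
        (Matrix.fromCols ((Y k)ᵀ * (Z (k + 1))ᵀ) ((Y k)ᵀ))
        (P k)).PosDef)
    (heq : ∀ k < T, Z k * Y k = P k)
    (hPlow : ∀ k ≤ T, (P k - η • (1 : Matrix (Fin n) (Fin n) ℝ)).PosSemidef)
    (hPhigh : ∀ k ≤ T, (ρ • (1 : Matrix (Fin n) (Fin n) ℝ) - P k).PosSemidef)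
    (b : ℝ) (hb : ∀ j < T, opNorm2 (B j) ≤ b)
    (K : ℕ → Matrix (Fin m) (Fin n) ℝ)
    (hK : ∀ k < T, K k = U k * Y k * (P k)⁻¹) :
    ∀ (x v d : ℕ → EuclideanSpace ℝ (Fin n)),
      (∀ k < T, x (k + 1) =
        matVec (A k + B k * K k) (x k) + matVec (B k * K k) (v k) + d k) →
      ∀ k ≤ T,
        ‖x k‖ ≤ Real.sqrt (ρ / η) * Real.sqrt ((1 - 1 / ρ) ^ k) * ‖x 0‖
          + b * (∑ j ∈ Finset.range k,
              Real.sqrt (ρ / η) * Real.sqrt ((1 - 1 / ρ) ^ (k - 1 - j)) *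
                opNorm2 (K j)) * (⨆ j : Fin k, ‖v (j : ℕ)‖)
          + (∑ j ∈ Finset.range k,
              Real.sqrt (ρ / η) * Real.sqrt ((1 - 1 / ρ) ^ (k - 1 - j))) *
              (⨆ j : Fin k, ‖d (j : ℕ)‖) := by
  intro x v d hx k hkT
  have hρ1 : 1 < ρ := lt_of_le_of_lt hη hρ
  have hρ0 : 0 < ρ := lt_trans one_pos hρ1
  have hη0 : 0 < η := lt_of_lt_of_le one_pos hη
  have hc0 : 0 ≤ 1 - 1 / ρ := by
    have : 1 / ρ < 1 := by rw [div_lt_one hρ0]; exact hρ1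
    linarith
  -- basic facts about `P`
  have hPt : ∀ j ≤ T, (P j)ᵀ = P j := fun j hj => hPsymm j hj
  have hlow : ∀ j ≤ T, ∀ y : Fin n → ℝ, η * (y ⬝ᵥ y) ≤ y ⬝ᵥ (P j) *ᵥ y := by
    intro j hj y
    have h0 := quad_nonneg (hPlow j hj) y
    rw [sub_mulVec, dotProduct_sub, smul_mulVec, one_mulVec, dotProduct_smul] at h0
    have := sub_nonneg.1 h0
    simpa [smul_eq_mul] using this
  have hhigh : ∀ j ≤ T, ∀ y : Fin n → ℝ, y ⬝ᵥ (P j) *ᵥ y ≤ ρ * (y ⬝ᵥ y) := by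
    intro j hj y
    have h0 := quad_nonneg (hPhigh j hj) y
    rw [sub_mulVec, dotProduct_sub, smul_mulVec, one_mulVec, dotProduct_smul] at h0
    have := sub_nonneg.1 h0
    simpa [smul_eq_mul] using this
  have hPD : ∀ j ≤ T, (P j).PosDef := by
    intro j hj
    refine Matrix.PosDef.of_dotProduct_mulVec_pos ?_ ?_
    · rw [Matrix.IsHermitian, conjTranspose_eq_transpose_of_trivial]
      exact hPsymm j hj
    · intro y hy
      have hyy : 0 < y ⬝ᵥ y := by
        rcases Function.ne_iff.1 hy with ⟨i, hi⟩
        exact Finset.sum_pos' (fun l _ => mul_self_nonneg _)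
          ⟨i, Finset.mem_univ i, mul_self_pos.2 hi⟩
      have := hlow j hj y
      have hpos : 0 < y ⬝ᵥ (P j) *ᵥ y := lt_of_lt_of_le (by positivity) this
      simpa using hpos
  -- the Lyapunov-like scalar sequence
  set s : ℕ → ℝ := fun j => Real.sqrt ((fun i => x j i) ⬝ᵥ (P j)⁻¹ *ᵥ (fun i => x j i))
    with hs
  set c : ℕ → ℝ := fun j =>
      (Real.sqrt η)⁻¹ * (b * opNorm2 (K j) * ‖v j‖ + ‖d j‖) with hcdef
  set θ : ℝ := Real.sqrt (1 - 1 / ρ) with hθ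
  -- one-step estimate
  have hstep : ∀ j < T, s (j + 1) ≤ θ * s j + c j := by
    intro j hjT
    have hj0 : j ≤ T := le_of_lt hjT
    have hj1 : (j + 1) ≤ T := hjT
    set Mj := A j + B j * K j with hMj
    have hKP : K j * P j = U j * Y j := by
      rw [hK j hjT, Matrix.mul_assoc, pd_mul_inv' (hPD j hj0), Matrix.mul_one]
    have hZR : Z (j + 1) + R j = A j * Z j + B j * U j := by
      rw [hR j hjT, hZ (j + 1), hdata j hjT, hZ j, Matrix.mul_add]
      abel
    have hMP : Mj * P j = (Z (j + 1) + R j) * Y j := by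
      calc Mj * P j = A j * P j + B j * (K j * P j) := by
            rw [hMj, Matrix.add_mul, Matrix.mul_assoc]
        _ = A j * (Z j * Y j) + B j * (U j * Y j) := by rw [heq j hjT, hKP]
        _ = (A j * Z j + B j * U j) * Y j := by
            rw [Matrix.add_mul, Matrix.mul_assoc, Matrix.mul_assoc]
        _ = (Z (j + 1) + R j) * Y j := by rw [hZR]
    have hkeyq : ∀ zv : Fin n → ℝ, zv ⬝ᵥ (Mj * P j * Mjᵀ) *ᵥ zv ≤
        zv ⬝ᵥ (P (j + 1)) *ᵥ zv - zv ⬝ᵥ zv :=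
      lmi_key (hPD j hj0) (hPt j hj0) (hLMI j hjT).posSemidef (hSNR j hjT) (hγ j hjT)
        (ha j hjT).1 (ha j hjT).2 hMP
    have hkey2 : ∀ zv : Fin n → ℝ, zv ⬝ᵥ (Mj * P j * Mjᵀ) *ᵥ zv ≤
        (1 - 1 / ρ) * (zv ⬝ᵥ (P (j + 1)) *ᵥ zv) := by
      intro zv
      have h1 := hkeyq zv
      have h2 := hhigh (j + 1) hj1 zv
      have h3 : (1 / ρ) * (zv ⬝ᵥ (P (j + 1)) *ᵥ zv) ≤ zv ⬝ᵥ zv := by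
        have h4 := mul_le_mul_of_nonneg_left h2 (le_of_lt (by positivity : (0:ℝ) < 1 / ρ))
        have h5 : (1 / ρ) * (ρ * (zv ⬝ᵥ zv)) = zv ⬝ᵥ zv := by
          field_simp
        linarith
      linarith
    have hcontr := contraction (hPD j hj0) (hPt j hj0) (hPD (j + 1) hj1) (hPt (j + 1) hj1)
      hc0 hkey2 (fun i => x j i)
    -- split the state update
    set xf : Fin n → ℝ := fun i => x j i with hxf
    set wf : Fin n → ℝ := (B j * K j) *ᵥ (fun i => v j i) + fun i => d j i with hwf
    have hxsplit : (fun i => x (j + 1) i) = Mj *ᵥ xf + wf := by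
      funext i
      rw [hx j hjT]
      simp [matVec, hwf, hxf, add_assoc, hMj]
    have htr := quad_triangle (hPD (j + 1) hj1).inv.posSemidef (Mj *ᵥ xf) wf
    have hsj1 : s (j + 1) =
        Real.sqrt ((Mj *ᵥ xf + wf) ⬝ᵥ (P (j + 1))⁻¹ *ᵥ (Mj *ᵥ xf + wf)) := by
      simp only [hs]
      rw [hxsplit]
    have hterm1 : Real.sqrt ((Mj *ᵥ xf) ⬝ᵥ (P (j + 1))⁻¹ *ᵥ (Mj *ᵥ xf)) ≤ θ * s j := by
      have := Real.sqrt_le_sqrt hcontr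
      rw [Real.sqrt_mul hc0] at this
      exact this
    -- the noise term
    set wvec : EuclideanSpace ℝ (Fin n) := matVec (B j * K j) (v j) + d j with hwvec
    have hwcoord : (fun i => wvec i) = wf := by
      funext i
      simp [hwvec, matVec, hwf]
    have hwnorm : Real.sqrt (wf ⬝ᵥ wf) = ‖wvec‖ := by
      rw [eucl_norm_eq wvec, hwcoord]
    have hterm2 : Real.sqrt (wf ⬝ᵥ (P (j + 1))⁻¹ *ᵥ wf) ≤ (Real.sqrt η)⁻¹ * ‖wvec‖ := by
      have h6 := quad_inv_le (hPD (j + 1) hj1) hη0 (hlow (j + 1) hj1) wf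
      have h7 := Real.sqrt_le_sqrt h6
      rw [Real.sqrt_mul (by positivity) , Real.sqrt_inv, hwnorm] at h7
      exact h7
    have hwle : ‖wvec‖ ≤ b * opNorm2 (K j) * ‖v j‖ + ‖d j‖ := by
      have h8 : ‖wvec‖ ≤ ‖matVec (B j * K j) (v j)‖ + ‖d j‖ := norm_add_le _ _
      have h9 : ‖matVec (B j * K j) (v j)‖ ≤ opNorm2 (B j) * (opNorm2 (K j) * ‖v j‖) := by
        rw [matVec_mul]
        exact (matVec_norm_le (B j) _).trans
          (mul_le_mul_of_nonneg_left (matVec_norm_le (K j) (v j)) (norm_nonneg _))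
      have h10 : opNorm2 (B j) * (opNorm2 (K j) * ‖v j‖) ≤ b * (opNorm2 (K j) * ‖v j‖) :=
        mul_le_mul_of_nonneg_right (hb j hjT)
          (mul_nonneg (norm_nonneg _) (norm_nonneg _))
      calc ‖wvec‖ ≤ ‖matVec (B j * K j) (v j)‖ + ‖d j‖ := h8
        _ ≤ b * (opNorm2 (K j) * ‖v j‖) + ‖d j‖ := by linarith
        _ = b * opNorm2 (K j) * ‖v j‖ + ‖d j‖ := by ring
    calc s (j + 1) = Real.sqrt ((Mj *ᵥ xf + wf) ⬝ᵥ (P (j + 1))⁻¹ *ᵥ (Mj *ᵥ xf + wf)) := hsj1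
      _ ≤ Real.sqrt ((Mj *ᵥ xf) ⬝ᵥ (P (j + 1))⁻¹ *ᵥ (Mj *ᵥ xf))
          + Real.sqrt (wf ⬝ᵥ (P (j + 1))⁻¹ *ᵥ wf) := htr
      _ ≤ θ * s j + (Real.sqrt η)⁻¹ * ‖wvec‖ := by
          have := hterm2
          linarith [hterm1]
      _ ≤ θ * s j + c j := by
          have := mul_le_mul_of_nonneg_left hwle
            (inv_nonneg.2 (Real.sqrt_nonneg η))
          simp only [hcdef]
          linarith
  -- iterate the recursion
  have hrec := geom_rec s c (Real.sqrt_nonneg _) hstep k hkT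
  -- convert to state norms
  have hxk : ‖x k‖ ≤ Real.sqrt ρ * s k := by
    have h11 := dot_le_inv_quad (hPD k hkT) (hPt k hkT) hρ0 (hhigh k hkT) (fun i => x k i)
    have h12 := Real.sqrt_le_sqrt h11
    rw [Real.sqrt_mul hρ0.le] at h12
    rw [eucl_norm_eq (x k)]
    exact h12
  have hs0 : s 0 ≤ (Real.sqrt η)⁻¹ * ‖x 0‖ := by
    have h13 := quad_inv_le (hPD 0 (Nat.zero_le T)) hη0 (hlow 0 (Nat.zero_le T))
      (fun i => x 0 i)
    have h14 := Real.sqrt_le_sqrt h13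
    rw [Real.sqrt_mul (by positivity), Real.sqrt_inv, ← eucl_norm_eq (x 0)] at h14
    exact h14
  have hsρη : Real.sqrt (ρ / η) = Real.sqrt ρ * (Real.sqrt η)⁻¹ := by
    rw [Real.sqrt_div hρ0.le, div_eq_mul_inv]
  -- suprema bounds
  set Vs := ⨆ j : Fin k, ‖v (j : ℕ)‖ with hVsdef
  set Ds := ⨆ j : Fin k, ‖d (j : ℕ)‖ with hDsdef
  have hVs : ∀ j < k, ‖v j‖ ≤ Vs := by
    intro j hj
    exact le_ciSup (f := fun i : Fin k => ‖v (i : ℕ)‖)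
      (Set.Finite.bddAbove (Set.finite_range _)) (⟨j, hj⟩ : Fin k)
  have hDs : ∀ j < k, ‖d j‖ ≤ Ds := by
    intro j hj
    exact le_ciSup (f := fun i : Fin k => ‖d (i : ℕ)‖)
      (Set.Finite.bddAbove (Set.finite_range _)) (⟨j, hj⟩ : Fin k)
  -- main chain
  have hchain : ‖x k‖ ≤ Real.sqrt (ρ / η) * θ ^ k * ‖x 0‖
      + ∑ j ∈ Finset.range k, Real.sqrt ρ * (θ ^ (k - 1 - j) * c j) := by
    have h15 := mul_le_mul_of_nonneg_left hrec (Real.sqrt_nonneg ρ)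
    rw [mul_add, Finset.mul_sum] at h15
    have h16 : Real.sqrt ρ * (θ ^ k * s 0) ≤ Real.sqrt (ρ / η) * θ ^ k * ‖x 0‖ := by
      rw [hsρη]
      have h17 := mul_le_mul_of_nonneg_left (a := Real.sqrt ρ * θ ^ k) hs0
        (mul_nonneg (Real.sqrt_nonneg ρ) (pow_nonneg (Real.sqrt_nonneg _) k))
      calc Real.sqrt ρ * (θ ^ k * s 0) = (Real.sqrt ρ * θ ^ k) * s 0 := by ring
        _ ≤ (Real.sqrt ρ * θ ^ k) * ((Real.sqrt η)⁻¹ * ‖x 0‖) := h17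
        _ = Real.sqrt ρ * (Real.sqrt η)⁻¹ * θ ^ k * ‖x 0‖ := by ring
    calc ‖x k‖ ≤ Real.sqrt ρ * s k := hxk
      _ ≤ Real.sqrt ρ * (θ ^ k * s 0)
          + ∑ j ∈ Finset.range k, Real.sqrt ρ * (θ ^ (k - 1 - j) * c j) := h15
      _ ≤ _ := by linarith
  -- per-term bound in the sum
  have hterm : ∀ j ∈ Finset.range k, Real.sqrt ρ * (θ ^ (k - 1 - j) * c j) ≤
      b * (Real.sqrt (ρ / η) * θ ^ (k - 1 - j) * opNorm2 (K j)) * Vs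
      + (Real.sqrt (ρ / η) * θ ^ (k - 1 - j)) * Ds := by
    intro j hj
    have hjk : j < k := Finset.mem_range.1 hj
    have hjT' : j < T := lt_of_lt_of_le hjk hkT
    have hb0 : 0 ≤ b := le_trans (norm_nonneg _) (hb j hjT')
    have hK0 : 0 ≤ opNorm2 (K j) := norm_nonneg _
    have hθe : 0 ≤ θ ^ (k - 1 - j) := pow_nonneg (Real.sqrt_nonneg _) _
    have hq : 0 ≤ Real.sqrt (ρ / η) := Real.sqrt_nonneg _
    have hco1 : 0 ≤ Real.sqrt (ρ / η) * θ ^ (k - 1 - j) * b * opNorm2 (K j) := by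
      exact mul_nonneg (mul_nonneg (mul_nonneg hq hθe) hb0) hK0
    have hco2 : 0 ≤ Real.sqrt (ρ / η) * θ ^ (k - 1 - j) := mul_nonneg hq hθe
    have hv1 : Real.sqrt (ρ / η) * θ ^ (k - 1 - j) * b * opNorm2 (K j) * ‖v j‖ ≤
        Real.sqrt (ρ / η) * θ ^ (k - 1 - j) * b * opNorm2 (K j) * Vs :=
      mul_le_mul_of_nonneg_left (hVs j hjk) hco1
    have hd1 : Real.sqrt (ρ / η) * θ ^ (k - 1 - j) * ‖d j‖ ≤
        Real.sqrt (ρ / η) * θ ^ (k - 1 - j) * Ds :=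
      mul_le_mul_of_nonneg_left (hDs j hjk) hco2
    have hLHS : Real.sqrt ρ * (θ ^ (k - 1 - j) * c j) =
        Real.sqrt (ρ / η) * θ ^ (k - 1 - j) * b * opNorm2 (K j) * ‖v j‖
        + Real.sqrt (ρ / η) * θ ^ (k - 1 - j) * ‖d j‖ := by
      simp only [hcdef, hsρη]
      ring
    rw [hLHS]
    calc Real.sqrt (ρ / η) * θ ^ (k - 1 - j) * b * opNorm2 (K j) * ‖v j‖
        + Real.sqrt (ρ / η) * θ ^ (k - 1 - j) * ‖d j‖
        ≤ Real.sqrt (ρ / η) * θ ^ (k - 1 - j) * b * opNorm2 (K j) * Vs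
          + Real.sqrt (ρ / η) * θ ^ (k - 1 - j) * Ds := by linarith
      _ = b * (Real.sqrt (ρ / η) * θ ^ (k - 1 - j) * opNorm2 (K j)) * Vs
          + (Real.sqrt (ρ / η) * θ ^ (k - 1 - j)) * Ds := by ring
  have hsum := Finset.sum_le_sum hterm
  have hsplit : ∑ j ∈ Finset.range k,
      (b * (Real.sqrt (ρ / η) * θ ^ (k - 1 - j) * opNorm2 (K j)) * Vs
        + (Real.sqrt (ρ / η) * θ ^ (k - 1 - j)) * Ds)
      = b * (∑ j ∈ Finset.range k,
          Real.sqrt (ρ / η) * θ ^ (k - 1 - j) * opNorm2 (K j)) * Vs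
        + (∑ j ∈ Finset.range k, Real.sqrt (ρ / η) * θ ^ (k - 1 - j)) * Ds := by
    rw [Finset.sum_add_distrib, ← Finset.sum_mul, ← Finset.sum_mul, ← Finset.mul_sum]
  -- finish
  simp only [hθ] at *
  simp only [sqrt_pow' hc0]
  calc ‖x k‖ ≤ Real.sqrt (ρ / η) * Real.sqrt (1 - 1 / ρ) ^ k * ‖x 0‖
      + ∑ j ∈ Finset.range k, Real.sqrt ρ * (Real.sqrt (1 - 1 / ρ) ^ (k - 1 - j) * c j) :=
        hchain
    _ ≤ _ := by
        rw [hsplit] at hsum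
        linarith
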